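/- Let (X, 𝒜, μ) be a probability space, T : X → X an ergodic invertible measure-preserving transformation, and (a_n)_{n≥1} a sequence of complex numbers with |a_n| ≤ 1 for all n. Suppose that for all f₁, g₁ ∈ L^∞(X, μ) and μ-almost every x ∈ X, (1/N) ∑_{n=1}^{N} a_n f₁(T^{n} x) g₁(T^{−n} x) → 0 as N → ∞. Then for all f, g ∈ L²(X, μ) and μ-almost every x ∈ X, (1/N) ∑_{n=1}^{N} a_n f(T^{n} x) g(T^{−n} x) → 0 as N → ∞. -/

import Mathlib

open MeasureTheory Filter Finset
set_option linter.unusedSectionVars false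

section Maximal

variable {X : Type*} [MeasurableSpace X] {μ : MeasureTheory.Measure X}

/-- Running maxima `max (0, max_{1≤k≤n} S_k f)` used in Garsia's proof of the
maximal ergodic theorem. -/
noncomputable def ergPhi (S : X → X) (f : X → ℝ) : ℕ → X → ℝ
  | 0 => fun _ => 0
  | (n+1) => fun x => max 0 (f x + ergPhi S f n (S x))

lemma ergPhi_zero (S : X → X) (f : X → ℝ) (x : X) : ergPhi S f 0 x = 0 := rfl

lemma ergPhi_succ (S : X → X) (f : X → ℝ) (n : ℕ) (x : X) :
    ergPhi S f (n+1) x = max 0 (f x + ergPhi S f n (S x)) := rfl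

lemma ergPhi_nonneg (S : X → X) (f : X → ℝ) : ∀ n x, 0 ≤ ergPhi S f n x
  | 0, _ => le_refl 0
  | (_+1), _ => le_max_left _ _

lemma ergPhi_mono (S : X → X) (f : X → ℝ) : ∀ n x, ergPhi S f n x ≤ ergPhi S f (n+1) x
  | 0, x => ergPhi_nonneg S f 1 x
  | (n+1), x => by
      rw [ergPhi_succ, ergPhi_succ]
      exact max_le_max le_rfl (add_le_add_right (ergPhi_mono S f n (S x)) _)

lemma ergPhi_measurable {S : X → X} (hS : Measurable S) {f : X → ℝ} (hf : Measurable f) :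
    ∀ n, Measurable (ergPhi S f n)
  | 0 => measurable_const
  | (n+1) => measurable_const.max (hf.add ((ergPhi_measurable hS hf n).comp hS))

lemma ergPhi_integrable {S : X → X} (hS : MeasurePreserving S μ μ)
    {f : X → ℝ} (hfi : Integrable f μ) : ∀ n, Integrable (ergPhi S f n) μ
  | 0 => integrable_zero _ _ _
  | (n+1) => by
      have hcomp : Integrable (ergPhi S f n ∘ S) μ :=
        memLp_one_iff_integrable.1
          ((memLp_one_iff_integrable.2 (ergPhi_integrable hS hfi n)).comp_measurePreserving hS)
      have := (hfi.add hcomp).pos_part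
      refine this.congr ?_
      filter_upwards with x
      simp [ergPhi_succ, max_comm, Function.comp]

lemma ergPhi_le_birkhoff (S : X → X) (f : X → ℝ) :
    ∀ n x, 0 < ergPhi S f n x → ∃ k, 1 ≤ k ∧ ergPhi S f n x ≤ birkhoffSum S f k x
  | 0, x => by simp [ergPhi_zero]
  | (n+1), x => by
      intro hpos
      rw [ergPhi_succ] at hpos ⊢
      have hv : 0 < f x + ergPhi S f n (S x) := by
        by_contra h
        push_neg at h
        rw [max_eq_left h] at hpos
        exact lt_irrefl _ hpos
      rw [max_eq_right hv.le]
      rcases lt_or_ge 0 (ergPhi S f n (S x)) with h | h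
      · obtain ⟨k, hk1, hk⟩ := ergPhi_le_birkhoff S f n (S x) h
        exact ⟨k + 1, by omega, by rw [birkhoffSum_succ']; linarith⟩
      · have h0 : ergPhi S f n (S x) = 0 := le_antisymm h (ergPhi_nonneg S f n (S x))
        exact ⟨1, le_rfl, by rw [birkhoffSum_one]; linarith⟩

lemma birkhoff_le_ergPhi (S : X → X) (f : X → ℝ) :
    ∀ n k, k ≤ n → ∀ x, birkhoffSum S f k x ≤ ergPhi S f n x := by
  intro n
  induction n with
  | zero => intro k hk x; interval_cases k; simp [ergPhi_zero]
  | succ n ih =>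
      intro k hk x
      match k with
      | 0 => simpa using ergPhi_nonneg S f (n+1) x
      | (k+1) =>
          rw [birkhoffSum_succ', ergPhi_succ]
          exact le_max_of_le_right (add_le_add_right (ih k (by omega) (S x)) _)

/-- The maximal ergodic theorem (Garsia's proof). -/
theorem maximal_ergodic (S : X ≃ᵐ X) (hS : MeasurePreserving (⇑S) μ μ) (f : X → ℝ)
    (hfm : Measurable f) (hfi : Integrable f μ) :
    0 ≤ ∫ x in {x | ∃ k, 1 ≤ k ∧ 0 < birkhoffSum (⇑S) f k x}, f x ∂μ := by
  set E : ℕ → Set X := fun n => {x | 0 < ergPhi (⇑S) f n x} with hE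
  have hphim : ∀ n, Measurable (ergPhi (⇑S) f n) := ergPhi_measurable S.measurable hfm
  have hphii : ∀ n, Integrable (ergPhi (⇑S) f n) μ := ergPhi_integrable hS hfi
  have hEm : ∀ n, MeasurableSet (E n) := fun n => measurableSet_lt measurable_const (hphim n)
  have hEmono : Monotone E := by
    refine monotone_nat_of_le_succ fun n x hx => ?_
    exact lt_of_lt_of_le hx (ergPhi_mono (⇑S) f n x)
  have hkey : ∀ n, 0 ≤ ∫ x in E n, f x ∂μ := by
    intro n
    match n with
    | 0 => 
        have : E 0 = ∅ := by ext x; simp [hE, ergPhi_zero]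
        simp [this]
    | (n+1) =>
        have hcomp : Integrable (fun x => ergPhi (⇑S) f n (S x)) μ :=
          memLp_one_iff_integrable.1
            ((memLp_one_iff_integrable.2 (hphii n)).comp_measurePreserving hS)
        have h1 : ∫ x in E (n+1), f x ∂μ
            = ∫ x in E (n+1), (ergPhi (⇑S) f (n+1) x - ergPhi (⇑S) f n (S x)) ∂μ := by
          refine setIntegral_congr_fun (hEm (n+1)) fun x hx => ?_
          have hx' : 0 < ergPhi (⇑S) f (n+1) x := hx
          have hv : 0 < f x + ergPhi (⇑S) f n (S x) := by
            by_contra h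
            push_neg at h
            rw [ergPhi_succ, max_eq_left h] at hx'
            exact lt_irrefl _ hx'
          rw [ergPhi_succ, max_eq_right hv.le]
          ring
        have h2 : ∫ x in E (n+1), (ergPhi (⇑S) f (n+1) x - ergPhi (⇑S) f n (S x)) ∂μ
            = (∫ x in E (n+1), ergPhi (⇑S) f (n+1) x ∂μ)
              - ∫ x in E (n+1), ergPhi (⇑S) f n (S x) ∂μ :=
          integral_sub ((hphii (n+1)).integrableOn) (hcomp.integrableOn)
        have h3 : ∫ x in E (n+1), ergPhi (⇑S) f (n+1) x ∂μ = ∫ x, ergPhi (⇑S) f (n+1) x ∂μ := by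
          rw [← integral_add_compl (hEm (n+1)) (hphii (n+1))]
          have : ∫ x in (E (n+1))ᶜ, ergPhi (⇑S) f (n+1) x ∂μ = 0 := by
            refine setIntegral_eq_zero_of_forall_eq_zero fun x hx => ?_
            have : ¬ 0 < ergPhi (⇑S) f (n+1) x := hx
            exact le_antisymm (not_lt.1 this) (ergPhi_nonneg (⇑S) f (n+1) x)
          rw [this, add_zero]
        have h4 : ∫ x in E (n+1), ergPhi (⇑S) f n (S x) ∂μ ≤ ∫ x, ergPhi (⇑S) f n (S x) ∂μ :=
          setIntegral_le_integral hcomp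
            (Eventually.of_forall fun x => ergPhi_nonneg (⇑S) f n (S x))
        have h5 : ∫ x, ergPhi (⇑S) f n (S x) ∂μ = ∫ x, ergPhi (⇑S) f n x ∂μ :=
          hS.integral_comp' _
        have h6 : ∫ x, ergPhi (⇑S) f n x ∂μ ≤ ∫ x, ergPhi (⇑S) f (n+1) x ∂μ :=
          integral_mono (hphii n) (hphii (n+1)) (fun x => ergPhi_mono (⇑S) f n x)
        rw [h1, h2, h3]
        linarith
  have hunion : ⋃ n, E n = {x | ∃ k, 1 ≤ k ∧ 0 < birkhoffSum (⇑S) f k x} := by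
    ext x
    simp only [Set.mem_iUnion, Set.mem_setOf_eq, hE]
    constructor
    · rintro ⟨n, hn⟩
      obtain ⟨k, hk1, hk⟩ := ergPhi_le_birkhoff (⇑S) f n x hn
      exact ⟨k, hk1, lt_of_lt_of_le hn hk⟩
    · rintro ⟨k, hk1, hk⟩
      exact ⟨k, lt_of_lt_of_le hk (birkhoff_le_ergPhi (⇑S) f k k le_rfl x)⟩
  have := tendsto_setIntegral_of_monotone hEm hEmono (hfi.integrableOn)
  rw [hunion] at this
  exact ge_of_tendsto' this hkey

end Maximal
section AvgBound

variable {X : Type*} [MeasurableSpace X] {μ : MeasureTheory.Measure X}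
  [MeasureTheory.IsProbabilityMeasure μ]

lemma birkhoffSum_measurable {S : X → X} (hS : Measurable S) {h : X → ℝ} (hm : Measurable h)
    (N : ℕ) : Measurable (fun x => birkhoffSum S h N x) := by
  unfold birkhoffSum
  exact Finset.measurable_sum _ fun k _ => hm.comp (hS.iterate k)

lemma freq_set_measurable {S : X → X} (hS : Measurable S) {h : X → ℝ} (hm : Measurable h)
    (b : ℝ) :
    MeasurableSet {x | ∃ᶠ N : ℕ in Filter.atTop, (N : ℝ) * b < birkhoffSum S h N x} := by
  have : {x | ∃ᶠ N : ℕ in Filter.atTop, (N : ℝ) * b < birkhoffSum S h N x}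
      = ⋂ m : ℕ, ⋃ N : ℕ, ⋃ (_ : m ≤ N), {x | (N : ℝ) * b < birkhoffSum S h N x} := by
    ext x
    simp [Filter.frequently_atTop, Set.mem_iInter, Set.mem_iUnion]
  rw [this]
  exact MeasurableSet.iInter fun m => MeasurableSet.iUnion fun N => MeasurableSet.iUnion fun _ =>
    measurableSet_lt measurable_const (birkhoffSum_measurable hS hm N)

lemma freq_step1 {S : X → X} {h : X → ℝ} {b b' : ℝ} (hbb : b < b') {x : X}
    (hx : ∃ᶠ N : ℕ in Filter.atTop, (N : ℝ) * b' < birkhoffSum S h N x) :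
    ∃ᶠ N : ℕ in Filter.atTop, (N : ℝ) * b < birkhoffSum S h N (S x) := by
  rw [Filter.frequently_atTop] at hx ⊢
  intro M
  obtain ⟨N₀, hN₀⟩ := exists_nat_ge ((h x - b') / (b' - b))
  obtain ⟨N, hNge, hNlt⟩ := hx (max (M + 1) (N₀ + 1))
  have hN1 : 1 ≤ N := le_trans (le_trans (by omega) (le_max_left (M+1) (N₀+1))) hNge
  obtain ⟨K, rfl⟩ : ∃ K, N = K + 1 := ⟨N - 1, by omega⟩
  refine ⟨K, by have := le_trans (le_max_left (M+1) (N₀+1)) hNge; omega, ?_⟩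
  have hsum : birkhoffSum S h (K + 1) x = h x + birkhoffSum S h K (S x) :=
    birkhoffSum_succ' S h K x
  have hKN₀ : (N₀ : ℝ) ≤ K := by
    have : N₀ + 1 ≤ K + 1 := le_trans (le_max_right (M+1) (N₀+1)) hNge
    exact_mod_cast by omega
  have hdiv : h x - b' ≤ (K : ℝ) * (b' - b) := by
    have h1 : (h x - b') / (b' - b) ≤ (K : ℝ) := le_trans hN₀ hKN₀
    have h2 : 0 < b' - b := by linarith
    calc h x - b' = ((h x - b') / (b' - b)) * (b' - b) := by field_simp
    _ ≤ (K : ℝ) * (b' - b) := by nlinarith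
  have hcast : ((K + 1 : ℕ) : ℝ) = (K : ℝ) + 1 := by push_cast; ring
  rw [hcast] at hNlt
  rw [hsum] at hNlt
  nlinarith

lemma freq_step2 {S : X → X} {h : X → ℝ} {b b' : ℝ} (hbb : b < b') {x : X}
    (hx : ∃ᶠ N : ℕ in Filter.atTop, (N : ℝ) * b' < birkhoffSum S h N (S x)) :
    ∃ᶠ N : ℕ in Filter.atTop, (N : ℝ) * b < birkhoffSum S h N x := by
  rw [Filter.frequently_atTop] at hx ⊢
  intro M
  obtain ⟨N₀, hN₀⟩ := exists_nat_ge ((b - h x) / (b' - b))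
  obtain ⟨N, hNge, hNlt⟩ := hx (max M N₀)
  refine ⟨N + 1, by have := le_trans (le_max_left M N₀) hNge; omega, ?_⟩
  have hsum : birkhoffSum S h (N + 1) x = h x + birkhoffSum S h N (S x) :=
    birkhoffSum_succ' S h N x
  have hNN₀ : (N₀ : ℝ) ≤ N := by exact_mod_cast le_trans (le_max_right M N₀) hNge
  have hdiv : b - h x ≤ (N : ℝ) * (b' - b) := by
    have h1 : (b - h x) / (b' - b) ≤ (N : ℝ) := le_trans hN₀ hNN₀
    have h2 : 0 < b' - b := by linarith
    calc b - h x = ((b - h x) / (b' - b)) * (b' - b) := by field_simp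
    _ ≤ (N : ℝ) * (b' - b) := by nlinarith
  have hcast : ((N + 1 : ℕ) : ℝ) = (N : ℝ) + 1 := by push_cast; ring
  rw [hcast, hsum]
  nlinarith

/-- Main consequence of the maximal ergodic theorem used for the density argument:
for an ergodic `S` and a nonnegative integrable `h`, almost surely the Birkhoff sums
are eventually bounded by `N * c` for any `c` larger than the space average. -/
theorem ergodic_avg_bound (S : X ≃ᵐ X) (hS : MeasureTheory.MeasurePreserving (⇑S) μ μ)
    (hSe : PreErgodic (⇑S) μ) (h : X → ℝ) (hm : Measurable h)
    (hi : MeasureTheory.Integrable h μ) (h0 : ∀ x, 0 ≤ h x) {c : ℝ}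
    (hc : (∫ x, h x ∂μ) < c) :
    ∀ᵐ x ∂μ, ∀ᶠ N : ℕ in Filter.atTop, birkhoffSum (⇑S) h N x ≤ (N : ℝ) * c := by
  set F : ℝ → Set X := fun b => {x | ∃ᶠ N : ℕ in Filter.atTop, (N : ℝ) * b < birkhoffSum (⇑S) h N x}
    with hF
  set G : Set X := {x | ∀ q : ℚ, (∫ y, h y ∂μ) < (q : ℝ) → (q : ℝ) < c → x ∈ F (q : ℝ)} with hG
  have hGm : MeasurableSet G := by
    have : G = ⋂ q : ℚ, ⋂ (_ : (∫ y, h y ∂μ) < (q : ℝ)), ⋂ (_ : (q : ℝ) < c), F (q : ℝ) := by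
      ext x; simp [hG, Set.mem_iInter]
    rw [this]
    exact MeasurableSet.iInter fun q => MeasurableSet.iInter fun _ =>
      MeasurableSet.iInter fun _ => freq_set_measurable S.measurable hm _
  have hGinv : (⇑S) ⁻¹' G = G := by
    ext x
    simp only [Set.mem_preimage, hG, Set.mem_setOf_eq]
    constructor
    · intro hx q hq1 hq2
      obtain ⟨q', hq'1, hq'2⟩ := exists_rat_btwn hq2
      exact freq_step2 hq'1 (hx q' (lt_trans hq1 hq'1) hq'2)
    · intro hx q hq1 hq2
      obtain ⟨q', hq'1, hq'2⟩ := exists_rat_btwn hq2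
      exact freq_step1 hq'1 (hx q' (lt_trans hq1 hq'1) hq'2)
  rcases hSe.prob_eq_zero_or_one hGm hGinv with hG0 | hG1
  · -- μ G = 0 : almost every point is eventually good
    have hae : ∀ᵐ x ∂μ, x ∉ G := by
      rw [MeasureTheory.ae_iff]
      convert hG0 using 2
      ext x; simp
    filter_upwards [hae] with x hx
    simp only [hG, Set.mem_setOf_eq] at hx
    push_neg at hx
    obtain ⟨q, hq1, hq2, hqF⟩ := hx
    have : ∀ᶠ N : ℕ in Filter.atTop, ¬ ((N : ℝ) * (q : ℝ) < birkhoffSum (⇑S) h N x) := by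
      rw [← Filter.not_frequently]
      exact hqF
    filter_upwards [this] with N hN
    calc birkhoffSum (⇑S) h N x ≤ (N : ℝ) * (q : ℝ) := not_lt.1 hN
    _ ≤ (N : ℝ) * c := by
        apply mul_le_mul_of_nonneg_left (le_of_lt hq2) (Nat.cast_nonneg N)
  · -- μ G = 1 : contradiction with the maximal ergodic theorem
    exfalso
    obtain ⟨q, hq1, hq2⟩ := exists_rat_btwn hc
    set E : Set X := {x | ∃ k, 1 ≤ k ∧ 0 < birkhoffSum (⇑S) (fun y => h y - (q : ℝ)) k x} with hEdef
    have hEm : MeasurableSet E := by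
      have : E = ⋃ k : ℕ, ⋃ (_ : 1 ≤ k),
          {x | 0 < birkhoffSum (⇑S) (fun y => h y - (q : ℝ)) k x} := by
        ext x; simp [hEdef]
      rw [this]
      exact MeasurableSet.iUnion fun k => MeasurableSet.iUnion fun _ =>
        measurableSet_lt measurable_const
          (birkhoffSum_measurable S.measurable (hm.sub measurable_const) k)
    have hbs : ∀ (k : ℕ) (x : X), birkhoffSum (⇑S) (fun y => h y - (q : ℝ)) k x
        = birkhoffSum (⇑S) h k x - (k : ℝ) * (q : ℝ) := by
      intro k x
      unfold birkhoffSum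
      rw [Finset.sum_sub_distrib, Finset.sum_const, Finset.card_range]
      push_cast; ring
    have hGE : G ⊆ E := by
      intro x hx
      have hxF : x ∈ F (q : ℝ) := hx q hq1 hq2
      rw [hF, Set.mem_setOf_eq, Filter.frequently_atTop] at hxF
      obtain ⟨N, hN1, hNlt⟩ := hxF 1
      exact ⟨N, hN1, by rw [hbs]; linarith⟩
    have hE1 : μ E = 1 := le_antisymm MeasureTheory.prob_le_one
      (le_trans (le_of_eq hG1.symm) (MeasureTheory.measure_mono hGE))
    have hEc : μ Eᶜ = 0 := (MeasureTheory.prob_compl_eq_zero_iff hEm).2 hE1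
    have hrestr : μ.restrict E = μ := by
      apply MeasureTheory.Measure.restrict_eq_self_of_ae_mem
      rw [MeasureTheory.ae_iff]
      exact hEc
    have hmax := maximal_ergodic S hS (fun y => h y - (q : ℝ)) (hm.sub measurable_const)
      (hi.sub (MeasureTheory.integrable_const _))
    rw [← hEdef] at hmax
    rw [show (∫ x in E, (h x - (q : ℝ)) ∂μ) = ∫ x, (h x - (q : ℝ)) ∂μ by rw [hrestr]] at hmax
    rw [MeasureTheory.integral_sub hi (MeasureTheory.integrable_const _),
      MeasureTheory.integral_const] at hmax
    simp only [MeasureTheory.probReal_univ, ENNReal.toReal_one, one_smul, smul_eq_mul] at hmax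
    linarith

end AvgBound
section Helpers

open MeasureTheory

variable {X : Type*} [MeasurableSpace X] {μ : MeasureTheory.Measure X}
  [MeasureTheory.IsProbabilityMeasure μ]

lemma sum_Icc_one_eq {M : Type*} [AddCommMonoid M] (v : ℕ → M) (N : ℕ) :
    ∑ n ∈ Finset.Icc 1 N, v n = ∑ i ∈ Finset.range N, v (i + 1) := by
  rw [← Finset.Ico_add_one_right_eq_Icc, Finset.sum_Ico_eq_sum_range]
  simp [add_comm]

/-- Icc-version of `ergodic_avg_bound`. -/
theorem ergodic_avg_bound_Icc (S : X ≃ᵐ X) (hS : MeasurePreserving (⇑S) μ μ)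
    (hSe : PreErgodic (⇑S) μ) (h : X → ℝ) (hm : Measurable h)
    (hi : Integrable h μ) (h0 : ∀ x, 0 ≤ h x) {c : ℝ}
    (hc : (∫ x, h x ∂μ) < c) :
    ∀ᵐ x ∂μ, ∀ᶠ N : ℕ in Filter.atTop, (∑ n ∈ Finset.Icc 1 N, h ((⇑S)^[n] x)) ≤ (N : ℝ) * c := by
  have hint : (∫ x, h (S x) ∂μ) < c := by rwa [hS.integral_comp' h]
  have key := ergodic_avg_bound S hS hSe (fun y => h (S y)) (hm.comp S.measurable)
    (memLp_one_iff_integrable.1 ((memLp_one_iff_integrable.2 hi).comp_measurePreserving hS))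
    (fun x => h0 (S x)) hint
  filter_upwards [key] with x hx
  have heq : ∀ N : ℕ, (∑ n ∈ Finset.Icc 1 N, h ((⇑S)^[n] x))
      = birkhoffSum (⇑S) (fun y => h (S y)) N x := by
    intro N
    rw [sum_Icc_one_eq (fun n => h ((⇑S)^[n] x)) N]
    unfold birkhoffSum
    refine Finset.sum_congr rfl fun i _ => ?_
    rw [Function.iterate_succ_apply' (⇑S) i x]
  simpa only [heq] using hx

lemma preErgodic_symm (T : X ≃ᵐ X) (hT : PreErgodic (⇑T) μ) : PreErgodic (⇑T.symm) μ := by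
  constructor
  intro s hs hinv
  refine hT.aeconst_set hs ?_
  have : (⇑T) ⁻¹' ((⇑T.symm) ⁻¹' s) = s := by ext x; simp
  rw [← hinv, this, hinv]

/-- Truncation approximation: any function whose `p`-th power of the norm is integrable
can be approximated by a bounded measurable function. -/
lemma trunc_approx (f : X → ℂ) (hfm : Measurable f) (p : ℕ) (hp : p ≠ 0)
    (hint : Integrable (fun x => ‖f x‖ ^ p) μ) {δ : ℝ} (hδ : 0 < δ) :
    ∃ f₁ : X → ℂ, Measurable f₁ ∧ MemLp f₁ ⊤ μ ∧ (∫ x, ‖f x - f₁ x‖ ^ p ∂μ) < δ := by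
  set u : ℕ → X → ℝ := fun M x => if (M : ℝ) < ‖f x‖ then ‖f x‖ ^ p else 0 with hu
  have hum : ∀ M, Measurable (u M) := fun M =>
    Measurable.ite (measurableSet_lt measurable_const hfm.norm)
      (hfm.norm.pow_const p) measurable_const
  have htend : Filter.Tendsto (fun M => ∫ x, u M x ∂μ) Filter.atTop (nhds (∫ x, (0:ℝ) ∂μ)) := by
    apply tendsto_integral_of_dominated_convergence (fun x => ‖f x‖ ^ p)
      (fun M => (hum M).aestronglyMeasurable) hint
    · intro M
      filter_upwards with x
      rw [hu]
      simp only
      split_ifs with hcase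
      · rw [Real.norm_of_nonneg (by positivity)]
      · rw [norm_zero]; positivity
    · filter_upwards with x
      have hev : ∀ᶠ M : ℕ in Filter.atTop, u M x = 0 := by
        rw [Filter.eventually_atTop]
        refine ⟨⌈‖f x‖⌉₊, fun M hM => ?_⟩
        rw [hu]
        simp only
        rw [if_neg]
        push_neg
        exact le_trans (Nat.le_ceil _) (by exact_mod_cast hM)
      exact Filter.Tendsto.congr' (by filter_upwards [hev] with M h using h.symm)
        tendsto_const_nhds
  rw [MeasureTheory.integral_zero] at htend
  have hex : ∀ᶠ M : ℕ in Filter.atTop, (∫ x, u M x ∂μ) < δ := htend.eventually_lt_const hδ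
  obtain ⟨M, hM⟩ := hex.exists
  refine ⟨fun x => if (M : ℝ) < ‖f x‖ then 0 else f x,
    Measurable.ite (measurableSet_lt measurable_const hfm.norm) measurable_const hfm, ?_, ?_⟩
  · refine memLp_top_of_bound (Measurable.ite (measurableSet_lt measurable_const hfm.norm)
      measurable_const hfm).aestronglyMeasurable (M : ℝ) ?_
    filter_upwards with x
    split_ifs with hcase
    · simpa using (Nat.cast_nonneg M : (0:ℝ) ≤ M)
    · exact not_lt.1 hcase
  · have heq : (∫ x, ‖f x - (if (M : ℝ) < ‖f x‖ then 0 else f x)‖ ^ p ∂μ) = ∫ x, u M x ∂μ := by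
      refine integral_congr_ae (Filter.Eventually.of_forall fun x => ?_)
      rw [hu]
      simp only
      split_ifs with hcase
      · rw [sub_zero]
      · rw [sub_self, norm_zero, zero_pow hp]
    rw [heq]
    exact hM

end Helpers
section StepA

open MeasureTheory

variable {X : Type*} [MeasurableSpace X] {μ : MeasureTheory.Measure X}
  [MeasureTheory.IsProbabilityMeasure μ]

lemma ae_orbit_bound (T : X ≃ᵐ X) (hTinv : MeasurePreserving (⇑T.symm) μ μ)
    {g₁ : X → ℂ} (hg₁ : MemLp g₁ ⊤ μ) :
    ∀ᵐ x ∂μ, ∀ n : ℕ, ‖g₁ ((⇑T.symm)^[n] x)‖ ≤ (eLpNormEssSup g₁ μ).toReal := by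
  have hfin : eLpNormEssSup g₁ μ ≠ ⊤ := by
    have := hg₁.2
    rw [eLpNorm_exponent_top] at this
    exact this.ne
  have hbase : ∀ᵐ y ∂μ, ‖g₁ y‖ ≤ (eLpNormEssSup g₁ μ).toReal := by
    filter_upwards [ae_le_eLpNormEssSup (f := g₁) (μ := μ)] with y hy
    have := ENNReal.toReal_mono hfin hy
    simpa using this
  rw [MeasureTheory.ae_all_iff]
  intro n
  have := (hTinv.iterate n).quasiMeasurePreserving.ae hbase
  exact this

lemma one_div_norm_natCast (N : ℕ) : ‖(1 / (N : ℂ))‖ = 1 / (N : ℝ) := by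
  simp

lemma stepA (T : X ≃ᵐ X) (hT : Ergodic (⇑T) μ) (hTinv : MeasurePreserving (⇑T.symm) μ μ)
    (a : ℕ → ℂ) (ha : ∀ n, ‖a n‖ ≤ 1)
    (hyp : ∀ f₁ g₁ : X → ℂ, MemLp f₁ ⊤ μ → MemLp g₁ ⊤ μ →
      ∀ᵐ x ∂μ,
        Filter.Tendsto (fun N : ℕ => (1 / (N : ℂ)) * ∑ n ∈ Finset.Icc 1 N,
            a n * f₁ ((⇑T)^[n] x) * g₁ ((⇑T.symm)^[n] x)) Filter.atTop (nhds 0))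
    (f g₁ : X → ℂ) (hfm : Measurable f) (hf : MemLp f 2 μ)
    (hg₁m : Measurable g₁) (hg₁ : MemLp g₁ ⊤ μ) :
    ∀ᵐ x ∂μ,
      Filter.Tendsto (fun N : ℕ => (1 / (N : ℂ)) * ∑ n ∈ Finset.Icc 1 N,
          a n * f ((⇑T)^[n] x) * g₁ ((⇑T.symm)^[n] x)) Filter.atTop (nhds 0) := by
  classical
  set C : ℝ := (eLpNormEssSup g₁ μ).toReal with hC
  have hC0 : 0 ≤ C := ENNReal.toReal_nonneg
  -- for each k, choose a bounded approximation of f in L¹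
  have hfint : Integrable (fun x => ‖f x‖ ^ 1) μ := by
    simpa using (hf.integrable one_le_two).norm
  have happrox : ∀ k : ℕ, ∃ f₁ : X → ℂ, Measurable f₁ ∧ MemLp f₁ ⊤ μ ∧
      (∫ x, ‖f x - f₁ x‖ ∂μ) < 1 / (k + 1 : ℝ) := by
    intro k
    obtain ⟨f₁, h1, h2, h3⟩ := trunc_approx f hfm 1 one_ne_zero hfint
      (δ := 1 / (k + 1 : ℝ)) (by positivity)
    exact ⟨f₁, h1, h2, by simpa using h3⟩
  choose F hFm hFtop hFerr using happrox
  -- a.e. facts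
  have h1 : ∀ᵐ x ∂μ, ∀ k : ℕ,
      Filter.Tendsto (fun N : ℕ => (1 / (N : ℂ)) * ∑ n ∈ Finset.Icc 1 N,
        a n * F k ((⇑T)^[n] x) * g₁ ((⇑T.symm)^[n] x)) Filter.atTop (nhds 0) := by
    rw [MeasureTheory.ae_all_iff]
    exact fun k => hyp (F k) g₁ (hFtop k) hg₁
  have h2 : ∀ᵐ x ∂μ, ∀ k : ℕ, ∀ᶠ N : ℕ in Filter.atTop,
      (∑ n ∈ Finset.Icc 1 N, ‖f ((⇑T)^[n] x) - F k ((⇑T)^[n] x)‖)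
        ≤ (N : ℝ) * (2 / (k + 1 : ℝ)) := by
    rw [MeasureTheory.ae_all_iff]
    intro k
    have hmeas : Measurable fun y => ‖f y - F k y‖ := (hfm.sub (hFm k)).norm
    have hint : Integrable (fun y => ‖f y - F k y‖) μ :=
      ((hf.integrable one_le_two).sub
        ((MemLp.mono_exponent (hFtop k) le_top).integrable le_rfl)).norm
    have hlt : (∫ y, ‖f y - F k y‖ ∂μ) < 2 / (k + 1 : ℝ) := by
      have := hFerr k
      have hkpos : (0 : ℝ) < (k : ℝ) + 1 := by positivity
      have h12 : (1 : ℝ) / (k + 1 : ℝ) < 2 / (k + 1 : ℝ) := by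
        rw [div_lt_div_iff₀ hkpos hkpos]
        nlinarith
      linarith
    exact ergodic_avg_bound_Icc T hT.toMeasurePreserving hT.toPreErgodic _ hmeas hint
      (fun y => norm_nonneg _) hlt
  filter_upwards [h1, h2, ae_orbit_bound T hTinv hg₁] with x hx1 hx2 hxg
  rw [Metric.tendsto_atTop]
  intro ε hε
  -- choose k with C * (2/(k+1)) < ε/2
  obtain ⟨k, hk⟩ := exists_nat_gt (4 * C / ε)
  have hck : C * (2 / (k + 1 : ℝ)) < ε / 2 := by
    have h4 : 4 * C < ε * k := by
      have := (div_lt_iff₀ hε).1 hk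
      linarith [this]
    have hkpos : (0 : ℝ) < (k : ℝ) + 1 := by positivity
    rw [mul_div_assoc', div_lt_iff₀ hkpos]
    nlinarith
  have hmain : ∀ᶠ N : ℕ in Filter.atTop, ‖(1 / (N : ℂ)) * ∑ n ∈ Finset.Icc 1 N,
      a n * F k ((⇑T)^[n] x) * g₁ ((⇑T.symm)^[n] x)‖ < ε / 2 := by
    have := Metric.tendsto_atTop.1 (hx1 k) (ε / 2) (by linarith)
    obtain ⟨N₀, hN₀⟩ := this
    rw [Filter.eventually_atTop]
    exact ⟨N₀, fun N hN => by simpa [dist_zero_right] using hN₀ N hN⟩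
  have hcomb : ∀ᶠ N : ℕ in Filter.atTop,
      ‖(1 / (N : ℂ)) * ∑ n ∈ Finset.Icc 1 N,
        a n * f ((⇑T)^[n] x) * g₁ ((⇑T.symm)^[n] x)‖ < ε := by
    filter_upwards [hx2 k, hmain, Filter.eventually_ge_atTop 1] with N hN2 hNmain hN1
    have hNpos : (0 : ℝ) < (N : ℝ) := by exact_mod_cast hN1
    set A : ℂ := (1 / (N : ℂ)) * ∑ n ∈ Finset.Icc 1 N,
      a n * f ((⇑T)^[n] x) * g₁ ((⇑T.symm)^[n] x) with hA
    set B : ℂ := (1 / (N : ℂ)) * ∑ n ∈ Finset.Icc 1 N,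
      a n * F k ((⇑T)^[n] x) * g₁ ((⇑T.symm)^[n] x) with hB
    have hdiff : A - B = (1 / (N : ℂ)) * ∑ n ∈ Finset.Icc 1 N,
        a n * (f ((⇑T)^[n] x) - F k ((⇑T)^[n] x)) * g₁ ((⇑T.symm)^[n] x) := by
      rw [hA, hB, ← mul_sub, ← Finset.sum_sub_distrib]
      congr 1
      refine Finset.sum_congr rfl fun n _ => ?_
      ring
    have hdiffbound : ‖A - B‖ ≤ C * (2 / (k + 1 : ℝ)) := by
      rw [hdiff]
      calc ‖(1 / (N : ℂ)) * ∑ n ∈ Finset.Icc 1 N,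
          a n * (f ((⇑T)^[n] x) - F k ((⇑T)^[n] x)) * g₁ ((⇑T.symm)^[n] x)‖
          = (1 / (N : ℝ)) * ‖∑ n ∈ Finset.Icc 1 N,
            a n * (f ((⇑T)^[n] x) - F k ((⇑T)^[n] x)) * g₁ ((⇑T.symm)^[n] x)‖ := by
            rw [norm_mul, one_div_norm_natCast]
        _ ≤ (1 / (N : ℝ)) * ∑ n ∈ Finset.Icc 1 N,
            ‖a n * (f ((⇑T)^[n] x) - F k ((⇑T)^[n] x)) * g₁ ((⇑T.symm)^[n] x)‖ := by
            apply mul_le_mul_of_nonneg_left (norm_sum_le _ _) (by positivity)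
        _ ≤ (1 / (N : ℝ)) * ∑ n ∈ Finset.Icc 1 N,
            ‖f ((⇑T)^[n] x) - F k ((⇑T)^[n] x)‖ * C := by
            apply mul_le_mul_of_nonneg_left _ (by positivity)
            refine Finset.sum_le_sum fun n _ => ?_
            rw [norm_mul, norm_mul]
            calc ‖a n‖ * ‖f ((⇑T)^[n] x) - F k ((⇑T)^[n] x)‖ * ‖g₁ ((⇑T.symm)^[n] x)‖
                ≤ 1 * ‖f ((⇑T)^[n] x) - F k ((⇑T)^[n] x)‖ * C := by
                  apply mul_le_mul (mul_le_mul (ha n) le_rfl (norm_nonneg _) (by norm_num))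
                    (hxg n) (norm_nonneg _) (by positivity)
              _ = ‖f ((⇑T)^[n] x) - F k ((⇑T)^[n] x)‖ * C := by ring
        _ = (1 / (N : ℝ)) * ((∑ n ∈ Finset.Icc 1 N,
            ‖f ((⇑T)^[n] x) - F k ((⇑T)^[n] x)‖) * C) := by
            rw [← Finset.sum_mul]
        _ ≤ (1 / (N : ℝ)) * (((N : ℝ) * (2 / (k + 1 : ℝ))) * C) := by
            apply mul_le_mul_of_nonneg_left _ (by positivity)
            exact mul_le_mul_of_nonneg_right hN2 hC0
        _ = C * (2 / (k + 1 : ℝ)) := by field_simp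
    calc ‖A‖ = ‖(A - B) + B‖ := by ring_nf
      _ ≤ ‖A - B‖ + ‖B‖ := norm_add_le _ _
      _ < C * (2 / (k + 1 : ℝ)) + ε / 2 := by
          apply add_lt_add_of_le_of_lt hdiffbound hNmain
      _ < ε := by linarith
  obtain ⟨N₀, hN₀⟩ := Filter.eventually_atTop.1 hcomb
  exact ⟨N₀, fun N hN => by simpa [dist_zero_right] using hN₀ N hN⟩

end StepA
section StepB

open MeasureTheory

variable {X : Type*} [MeasurableSpace X] {μ : MeasureTheory.Measure X}
  [MeasureTheory.IsProbabilityMeasure μ]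

lemma amgm_div (u v s : ℝ) (hs : 0 < s) : u * v ≤ (s * u ^ 2 + v ^ 2 / s) / 2 := by
  have h2 : u * v ≤ (s ^ 2 * u ^ 2 + v ^ 2) / (2 * s) := by
    rw [le_div_iff₀ (by positivity)]
    nlinarith [sq_nonneg (s * u - v)]
  have h3 : (s ^ 2 * u ^ 2 + v ^ 2) / (2 * s) = (s * u ^ 2 + v ^ 2 / s) / 2 := by
    field_simp
  linarith

lemma memℒp_two_integrable_sq {u : X → ℂ} (h : MemLp u 2 μ) :
    Integrable (fun x => ‖u x‖ ^ 2) μ := by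
  have h1 := h.integrable_norm_rpow two_ne_zero ENNReal.ofNat_ne_top
  have h2 : (fun x => ‖u x‖ ^ (2:ℕ)) = fun x => ‖u x‖ ^ ENNReal.toReal 2 := by
    funext x
    rw [ENNReal.toReal_ofNat, show ((2:ℝ) = ((2:ℕ):ℝ)) by norm_num, Real.rpow_natCast]
  rw [show (fun x => ‖u x‖ ^ (2:ℕ)) = fun x => ‖u x‖ ^ ENNReal.toReal 2 from h2]
  exact h1

lemma stepB (T : X ≃ᵐ X) (hT : Ergodic (⇑T) μ) (hTinv : MeasurePreserving (⇑T.symm) μ μ)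
    (a : ℕ → ℂ) (ha : ∀ n, ‖a n‖ ≤ 1)
    (hyp : ∀ f₁ g₁ : X → ℂ, MemLp f₁ ⊤ μ → MemLp g₁ ⊤ μ →
      ∀ᵐ x ∂μ,
        Filter.Tendsto (fun N : ℕ => (1 / (N : ℂ)) * ∑ n ∈ Finset.Icc 1 N,
            a n * f₁ ((⇑T)^[n] x) * g₁ ((⇑T.symm)^[n] x)) Filter.atTop (nhds 0))
    (f g : X → ℂ) (hfm : Measurable f) (hf : MemLp f 2 μ)
    (hgm : Measurable g) (hg : MemLp g 2 μ) :
    ∀ᵐ x ∂μ,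
      Filter.Tendsto (fun N : ℕ => (1 / (N : ℂ)) * ∑ n ∈ Finset.Icc 1 N,
          a n * f ((⇑T)^[n] x) * g ((⇑T.symm)^[n] x)) Filter.atTop (nhds 0) := by
  classical
  set c₁ : ℝ := (∫ x, ‖f x‖ ^ 2 ∂μ) + 1 with hc₁
  have hc₁pos : 0 < c₁ := by
    have : 0 ≤ ∫ x, ‖f x‖ ^ 2 ∂μ := integral_nonneg fun x => by positivity
    linarith
  -- approximations of g in L²
  have hgint : Integrable (fun x => ‖g x‖ ^ 2) μ := memℒp_two_integrable_sq hg
  have happrox : ∀ k : ℕ, ∃ g₁ : X → ℂ, Measurable g₁ ∧ MemLp g₁ ⊤ μ ∧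
      (∫ x, ‖g x - g₁ x‖ ^ 2 ∂μ) < 1 / (k + 1 : ℝ) :=
    fun k => trunc_approx g hgm 2 two_ne_zero hgint (by positivity)
  choose G hGm hGtop hGerr using happrox
  -- a.e. facts
  have h1 : ∀ᵐ x ∂μ, ∀ k : ℕ,
      Filter.Tendsto (fun N : ℕ => (1 / (N : ℂ)) * ∑ n ∈ Finset.Icc 1 N,
        a n * f ((⇑T)^[n] x) * G k ((⇑T.symm)^[n] x)) Filter.atTop (nhds 0) := by
    rw [MeasureTheory.ae_all_iff]
    exact fun k => stepA T hT hTinv a ha hyp f (G k) hfm hf (hGm k) (hGtop k)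
  have h2 : ∀ᵐ x ∂μ, ∀ᶠ N : ℕ in Filter.atTop,
      (∑ n ∈ Finset.Icc 1 N, ‖f ((⇑T)^[n] x)‖ ^ 2) ≤ (N : ℝ) * c₁ := by
    refine ergodic_avg_bound_Icc T hT.toMeasurePreserving hT.toPreErgodic _
      (hfm.norm.pow_const 2) (memℒp_two_integrable_sq hf) (fun y => by positivity) ?_
    rw [hc₁]; linarith
  have h3 : ∀ᵐ x ∂μ, ∀ k : ℕ, ∀ᶠ N : ℕ in Filter.atTop,
      (∑ n ∈ Finset.Icc 1 N, ‖g ((⇑T.symm)^[n] x) - G k ((⇑T.symm)^[n] x)‖ ^ 2)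
        ≤ (N : ℝ) * (2 / (k + 1 : ℝ)) := by
    rw [MeasureTheory.ae_all_iff]
    intro k
    have hmeas : Measurable fun y => ‖g y - G k y‖ ^ 2 := ((hgm.sub (hGm k)).norm).pow_const 2
    have hint : Integrable (fun y => ‖g y - G k y‖ ^ 2) μ :=
      memℒp_two_integrable_sq (hg.sub (MemLp.mono_exponent (hGtop k) le_top))
    have hlt : (∫ y, ‖g y - G k y‖ ^ 2 ∂μ) < 2 / (k + 1 : ℝ) := by
      have := hGerr k
      have hkpos : (0 : ℝ) < (k : ℝ) + 1 := by positivity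
      have h12 : (1 : ℝ) / (k + 1 : ℝ) < 2 / (k + 1 : ℝ) := by
        rw [div_lt_div_iff₀ hkpos hkpos]; nlinarith
      linarith
    exact ergodic_avg_bound_Icc T.symm hTinv (preErgodic_symm T hT.toPreErgodic) _ hmeas hint
      (fun y => by positivity) hlt
  filter_upwards [h1, h2, h3] with x hx1 hx2 hx3
  rw [Metric.tendsto_atTop]
  intro ε hε
  set s : ℝ := ε / (2 * c₁) with hs
  have hspos : 0 < s := by positivity
  obtain ⟨k, hk⟩ := exists_nat_gt (4 / (s * ε))
  have hδ : (2 / (k + 1 : ℝ)) / s ≤ ε / 2 := by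
    have hkpos : (0 : ℝ) < (k : ℝ) + 1 := by positivity
    have h4 : 4 / (s * ε) < (k : ℝ) + 1 := by linarith
    have h5 : 4 < ((k : ℝ) + 1) * (s * ε) := by
      rw [div_lt_iff₀ (by positivity)] at h4
      linarith
    rw [div_div, div_le_div_iff₀ (by positivity) (by norm_num)]
    nlinarith
  have hsc : s * c₁ = ε / 2 := by
    rw [hs]; field_simp
  have hmain : ∀ᶠ N : ℕ in Filter.atTop, ‖(1 / (N : ℂ)) * ∑ n ∈ Finset.Icc 1 N,
      a n * f ((⇑T)^[n] x) * G k ((⇑T.symm)^[n] x)‖ < ε / 2 := by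
    obtain ⟨N₀, hN₀⟩ := Metric.tendsto_atTop.1 (hx1 k) (ε / 2) (by linarith)
    rw [Filter.eventually_atTop]
    exact ⟨N₀, fun N hN => by simpa [dist_zero_right] using hN₀ N hN⟩
  have hcomb : ∀ᶠ N : ℕ in Filter.atTop,
      ‖(1 / (N : ℂ)) * ∑ n ∈ Finset.Icc 1 N,
        a n * f ((⇑T)^[n] x) * g ((⇑T.symm)^[n] x)‖ < ε := by
    filter_upwards [hx2, hx3 k, hmain, Filter.eventually_ge_atTop 1] with N hN2 hN3 hNmain hN1
    have hNpos : (0 : ℝ) < (N : ℝ) := by exact_mod_cast hN1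
    set A : ℂ := (1 / (N : ℂ)) * ∑ n ∈ Finset.Icc 1 N,
      a n * f ((⇑T)^[n] x) * g ((⇑T.symm)^[n] x) with hA
    set B : ℂ := (1 / (N : ℂ)) * ∑ n ∈ Finset.Icc 1 N,
      a n * f ((⇑T)^[n] x) * G k ((⇑T.symm)^[n] x) with hB
    have hdiff : A - B = (1 / (N : ℂ)) * ∑ n ∈ Finset.Icc 1 N,
        a n * f ((⇑T)^[n] x) * (g ((⇑T.symm)^[n] x) - G k ((⇑T.symm)^[n] x)) := by
      rw [hA, hB, ← mul_sub, ← Finset.sum_sub_distrib]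
      congr 1
      refine Finset.sum_congr rfl fun n _ => ?_
      ring
    have hdiffbound : ‖A - B‖ ≤ ε / 2 := by
      rw [hdiff]
      calc ‖(1 / (N : ℂ)) * ∑ n ∈ Finset.Icc 1 N,
          a n * f ((⇑T)^[n] x) * (g ((⇑T.symm)^[n] x) - G k ((⇑T.symm)^[n] x))‖
          = (1 / (N : ℝ)) * ‖∑ n ∈ Finset.Icc 1 N,
            a n * f ((⇑T)^[n] x) * (g ((⇑T.symm)^[n] x) - G k ((⇑T.symm)^[n] x))‖ := by
            rw [norm_mul, one_div_norm_natCast]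
        _ ≤ (1 / (N : ℝ)) * ∑ n ∈ Finset.Icc 1 N,
            ‖a n * f ((⇑T)^[n] x) * (g ((⇑T.symm)^[n] x) - G k ((⇑T.symm)^[n] x))‖ := by
            exact mul_le_mul_of_nonneg_left (norm_sum_le _ _) (by positivity)
        _ ≤ (1 / (N : ℝ)) * ∑ n ∈ Finset.Icc 1 N,
            (s * ‖f ((⇑T)^[n] x)‖ ^ 2
              + ‖g ((⇑T.symm)^[n] x) - G k ((⇑T.symm)^[n] x)‖ ^ 2 / s) / 2 := by
            apply mul_le_mul_of_nonneg_left _ (by positivity)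
            refine Finset.sum_le_sum fun n _ => ?_
            rw [norm_mul, norm_mul]
            calc ‖a n‖ * ‖f ((⇑T)^[n] x)‖ * ‖g ((⇑T.symm)^[n] x) - G k ((⇑T.symm)^[n] x)‖
                ≤ ‖f ((⇑T)^[n] x)‖ * ‖g ((⇑T.symm)^[n] x) - G k ((⇑T.symm)^[n] x)‖ := by
                  apply mul_le_mul_of_nonneg_right _ (norm_nonneg _)
                  calc ‖a n‖ * ‖f ((⇑T)^[n] x)‖ ≤ 1 * ‖f ((⇑T)^[n] x)‖ :=
                    mul_le_mul_of_nonneg_right (ha n) (norm_nonneg _)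
                  _ = ‖f ((⇑T)^[n] x)‖ := one_mul _
              _ ≤ (s * ‖f ((⇑T)^[n] x)‖ ^ 2
                  + ‖g ((⇑T.symm)^[n] x) - G k ((⇑T.symm)^[n] x)‖ ^ 2 / s) / 2 :=
                  amgm_div _ _ s hspos
        _ = (1 / (N : ℝ)) * ((s * ∑ n ∈ Finset.Icc 1 N, ‖f ((⇑T)^[n] x)‖ ^ 2
            + (∑ n ∈ Finset.Icc 1 N,
                ‖g ((⇑T.symm)^[n] x) - G k ((⇑T.symm)^[n] x)‖ ^ 2) / s) / 2) := by
            rw [← Finset.sum_div, Finset.sum_add_distrib, ← Finset.mul_sum, ← Finset.sum_div]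
        _ ≤ (1 / (N : ℝ)) * ((s * ((N : ℝ) * c₁) + ((N : ℝ) * (2 / (k + 1 : ℝ))) / s) / 2) := by
            gcongr
        _ = (s * c₁ + (2 / (k + 1 : ℝ)) / s) / 2 := by
            field_simp
        _ ≤ (ε / 2 + ε / 2) / 2 := by
            rw [hsc]
            gcongr
        _ = ε / 2 := by ring
    calc ‖A‖ = ‖(A - B) + B‖ := by ring_nf
      _ ≤ ‖A - B‖ + ‖B‖ := norm_add_le _ _
      _ < ε / 2 + ε / 2 := add_lt_add_of_le_of_lt hdiffbound hNmain
      _ = ε := by ring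
  obtain ⟨N₀, hN₀⟩ := Filter.eventually_atTop.1 hcomb
  exact ⟨N₀, fun N hN => by simpa [dist_zero_right] using hN₀ N hN⟩

end StepB
/-- `L²`-extension by density: if the weighted bilinear averages
`(1/N) ∑_{n=1}^N a_n f₁(Tⁿ x) g₁(T^{−n} x)` converge to `0` a.e. for all
`f₁, g₁ ∈ L^∞`, where `(a_n)` is 1-bounded and `T` is an ergodic invertible
measure-preserving transformation of a probability space, then they converge to `0`
a.e. for all `f, g ∈ L²`. -/
theorem bilinear_avg_tendsto_zero_of_Linfty_to_L2
    {X : Type*} [MeasurableSpace X] (μ : Measure X) [IsProbabilityMeasure μ]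
    (T : X ≃ᵐ X) (hT : Ergodic (⇑T) μ) (hTinv : MeasurePreserving (⇑T.symm) μ μ)
    (a : ℕ → ℂ) (ha : ∀ n, ‖a n‖ ≤ 1)
    (hyp : ∀ f₁ g₁ : X → ℂ, MemLp f₁ ⊤ μ → MemLp g₁ ⊤ μ →
      ∀ᵐ x ∂μ,
        Tendsto (fun N : ℕ => (1 / (N : ℂ)) * ∑ n ∈ Finset.Icc 1 N,
            a n * f₁ ((⇑T)^[n] x) * g₁ ((⇑T.symm)^[n] x)) atTop (nhds 0))
    (f g : X → ℂ) (hf : MemLp f 2 μ) (hg : MemLp g 2 μ) :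
    ∀ᵐ x ∂μ,
      Tendsto (fun N : ℕ => (1 / (N : ℂ)) * ∑ n ∈ Finset.Icc 1 N,
          a n * f ((⇑T)^[n] x) * g ((⇑T.symm)^[n] x)) atTop (nhds 0) := by
  -- pass to measurable representatives
  set f' : X → ℂ := hf.1.mk f with hf'def
  set g' : X → ℂ := hg.1.mk g with hg'def
  have hff' : f =ᵐ[μ] f' := hf.1.ae_eq_mk
  have hgg' : g =ᵐ[μ] g' := hg.1.ae_eq_mk
  have hf'm : Measurable f' := hf.1.stronglyMeasurable_mk.measurable
  have hg'm : Measurable g' := hg.1.stronglyMeasurable_mk.measurable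
  have hf' : MemLp f' 2 μ := hf.ae_eq hff'
  have hg' : MemLp g' 2 μ := hg.ae_eq hgg'
  have hmain := stepB T hT hTinv a ha hyp f' g' hf'm hf' hg'm hg'
  have hfn : ∀ n : ℕ, (f ∘ (⇑T)^[n]) =ᵐ[μ] (f' ∘ (⇑T)^[n]) := fun n =>
    (hT.toMeasurePreserving.iterate n).quasiMeasurePreserving.ae_eq_comp hff'
  have hgn : ∀ n : ℕ, (g ∘ (⇑T.symm)^[n]) =ᵐ[μ] (g' ∘ (⇑T.symm)^[n]) := fun n =>
    (hTinv.iterate n).quasiMeasurePreserving.ae_eq_comp hgg'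
  have hfae : ∀ᵐ x ∂μ, ∀ n : ℕ, f ((⇑T)^[n] x) = f' ((⇑T)^[n] x) :=
    MeasureTheory.ae_all_iff.2 fun n => hfn n
  have hgae : ∀ᵐ x ∂μ, ∀ n : ℕ, g ((⇑T.symm)^[n] x) = g' ((⇑T.symm)^[n] x) :=
    MeasureTheory.ae_all_iff.2 fun n => hgn n
  filter_upwards [hmain, hfae, hgae] with x hx hfx hgx
  refine hx.congr fun N => ?_
  congr 1
  refine Finset.sum_congr rfl fun n _ => ?_
  rw [hfx n, hgx n]
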